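/- Let d ≥ 2. Given rational numbers a_0, a_1, ..., a_{d-1} with a_0 ≠ 0, there exists a nonzero rational number a_d such that the polynomial a_d x^d + ... + a_1 x + a_0 has no rational root. -/

import Mathlib

theorem stmt_2 (d : ℕ) (hd : 2 ≤ d) (a : ℕ → ℚ) (h0 : a 0 ≠ 0) :
    ∃ ad : ℚ, ad ≠ 0 ∧
      ∀ r : ℚ, ad * r ^ d + ∑ j ∈ Finset.range d, a j * r ^ j ≠ 0 := by
  classical
  set N : ℕ := ∏ j ∈ Finset.range d, (a j).den with hN
  have hNpos : 0 < N := Finset.prod_pos (fun j _ => (a j).pos)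
  have hNne : (N : ℚ) ≠ 0 := by positivity
  set c : ℕ → ℤ := fun j => (a j).num * ((N / (a j).den : ℕ) : ℤ) with hc
  have hcast : ∀ j ∈ Finset.range d, (c j : ℚ) = (N : ℚ) * a j := by
    intro j hj
    have hdvd : (a j).den ∣ N := Finset.dvd_prod_of_mem _ hj
    have hden : ((a j).den : ℚ) ≠ 0 := by exact_mod_cast (a j).den_nz
    have h1 : ((N / (a j).den : ℕ) : ℚ) = (N : ℚ) / ((a j).den : ℚ) :=
      Nat.cast_div hdvd hden
    have h2 : ((a j).num : ℚ) / ((a j).den : ℚ) = a j := Rat.num_div_den _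
    calc (c j : ℚ) = ((a j).num : ℚ) * ((N / (a j).den : ℕ) : ℚ) := by
          simp only [hc, Int.cast_mul, Int.cast_natCast]
      _ = ((a j).num : ℚ) * ((N : ℚ) / ((a j).den : ℚ)) := by rw [h1]
      _ = (N : ℚ) * a j := by conv_rhs => rw [← h2]
                              ring
  have hc0 : c 0 ≠ 0 := by
    intro h
    have h0' : (c 0 : ℚ) = (N : ℚ) * a 0 := hcast 0 (Finset.mem_range.mpr (by omega))
    rw [h] at h0'
    exact h0 (by simpa [hNne] using h0')
  obtain ⟨p, hpge, hpp⟩ := Nat.exists_infinite_primes ((c 0).natAbs + 1)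
  have hpInt : Prime (p : ℤ) := Nat.prime_iff_prime_int.mp hpp
  have hpne : (p : ℚ) ≠ 0 := by exact_mod_cast hpp.ne_zero
  have hpndvd : ¬ (p : ℤ) ∣ c 0 := by
    intro h
    have h' : ((p : ℤ)).natAbs ∣ (c 0).natAbs := Int.natAbs_dvd_natAbs.mpr h
    simp only [Int.natAbs_natCast] at h'
    have := Nat.le_of_dvd (Int.natAbs_pos.mpr hc0) h'
    omega
  refine ⟨1 / ((p : ℚ) * N), by positivity, ?_⟩
  intro r heq
  set u : ℤ := r.num with hu
  set v : ℤ := (r.den : ℤ) with hv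
  have hvne : (v : ℚ) ≠ 0 := by
    rw [hv]; exact_mod_cast (Nat.cast_ne_zero.mpr r.den_nz : ((r.den : ℤ)) ≠ 0)
  have hru : (u : ℚ) = r * (v : ℚ) := by
    rw [hu, hv]
    push_cast
    exact (Rat.mul_den_eq_num r).symm
  have key : (u : ℚ) ^ d + (p : ℚ) * ∑ j ∈ Finset.range d,
      (c j : ℚ) * (u : ℚ) ^ j * (v : ℚ) ^ (d - j) = 0 := by
    have hsum : ∑ j ∈ Finset.range d, (c j : ℚ) * (u : ℚ) ^ j * (v : ℚ) ^ (d - j)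
        = (N : ℚ) * (v : ℚ) ^ d * ∑ j ∈ Finset.range d, a j * r ^ j := by
      rw [Finset.mul_sum]
      refine Finset.sum_congr rfl (fun j hj => ?_)
      have hjd : j ≤ d := le_of_lt (Finset.mem_range.mp hj)
      have hvpow : (v : ℚ) ^ d = (v : ℚ) ^ j * (v : ℚ) ^ (d - j) := by
        rw [← pow_add, Nat.add_sub_cancel' hjd]
      rw [hcast j hj, hru, hvpow]
      ring
    have hud : (u : ℚ) ^ d = r ^ d * (v : ℚ) ^ d := by rw [hru]; ring
    have hpN : (p : ℚ) * (N : ℚ) ≠ 0 := mul_ne_zero hpne hNne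
    have h2 : r ^ d = -((p : ℚ) * N) * ∑ j ∈ Finset.range d, a j * r ^ j := by
      field_simp at heq
      linarith
    rw [hsum, hud, h2]
    ring
  have keyZ : u ^ d + (p : ℤ) * ∑ j ∈ Finset.range d,
      c j * u ^ j * v ^ (d - j) = 0 := by exact_mod_cast key
  set S : ℤ := ∑ j ∈ Finset.range d, c j * u ^ j * v ^ (d - j) with hS
  have hpu : (p : ℤ) ∣ u := by
    have hdvd : (p : ℤ) ∣ u ^ d := ⟨-S, by linarith⟩
    exact hpInt.dvd_of_dvd_pow hdvd
  have hp2 : (p : ℤ) ^ 2 ∣ u ^ d := by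
    calc (p : ℤ) ^ 2 ∣ u ^ 2 := pow_dvd_pow_of_dvd hpu 2
    _ ∣ u ^ d := pow_dvd_pow u hd
  have hpS : (p : ℤ) ∣ S := by
    have hps_eq : (p : ℤ) * S = -(u ^ d) := by linarith
    have h3 : (p : ℤ) * (p : ℤ) ∣ (p : ℤ) * S := by
      rw [hps_eq, show (p : ℤ) * (p : ℤ) = (p : ℤ) ^ 2 from (sq _).symm]
      exact dvd_neg.mpr hp2
    exact (mul_dvd_mul_iff_left (show (p : ℤ) ≠ 0 by exact_mod_cast hpp.ne_zero)).mp h3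
  have h0mem : 0 ∈ Finset.range d := Finset.mem_range.mpr (by omega)
  have hsplit : S = c 0 * u ^ 0 * v ^ (d - 0) +
      ∑ j ∈ (Finset.range d).erase 0, c j * u ^ j * v ^ (d - j) :=
    (Finset.add_sum_erase _ _ h0mem).symm
  have hptail : (p : ℤ) ∣ ∑ j ∈ (Finset.range d).erase 0, c j * u ^ j * v ^ (d - j) := by
    refine Finset.dvd_sum (fun j hj => ?_)
    have hj0 : j ≠ 0 := (Finset.mem_erase.mp hj).1
    have : (p : ℤ) ∣ u ^ j := dvd_pow hpu hj0
    exact Dvd.dvd.mul_right (this.mul_left _) _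
  have hp0 : (p : ℤ) ∣ c 0 * v ^ d := by
    have h4 : (p : ℤ) ∣ S - ∑ j ∈ (Finset.range d).erase 0, c j * u ^ j * v ^ (d - j) :=
      dvd_sub hpS hptail
    have h5 : S - ∑ j ∈ (Finset.range d).erase 0, c j * u ^ j * v ^ (d - j)
        = c 0 * v ^ d := by
      rw [hsplit]
      simp only [pow_zero, mul_one, Nat.sub_zero, add_sub_cancel_right]
    rwa [h5] at h4
  have hpv : (p : ℤ) ∣ v := by
    rcases hpInt.dvd_mul.mp hp0 with h | h
    · exact absurd h hpndvd
    · exact hpInt.dvd_of_dvd_pow h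
  have hpun : p ∣ u.natAbs := by
    have h' := Int.natAbs_dvd_natAbs.mpr hpu
    simpa using h'
  have hpvn : p ∣ r.den := by
    have h' := Int.natAbs_dvd_natAbs.mpr hpv
    simpa [hv] using h'
  have := Nat.Coprime.eq_one_of_dvd (Nat.Coprime.coprime_dvd_left hpun r.reduced) hpvn
  exact hpp.one_lt.ne' this
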